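/- Let p be a prime, m ≤ p, and write m = p^ν·M with p ∤ M and M having base-p digits [m_θ,...,m_1,m_0] with m_θ ≥ 1 and θ < j. Then the base-p expansion of M(p^j − 1) is [m_θ,...,m_1,(m_0−1),(p−1),...,(p−1),(p−m_θ−1),...,(p−m_1−1),(p−m_0)], where (p−1) is repeated j−θ−1 times. -/

import Mathlib

lemma ofDigits_int_nil (b : ℤ) : Nat.ofDigits b [] = 0 := rfl

lemma ofDigits_int_cons (b : ℤ) (d : ℕ) (l : List ℕ) :
    Nat.ofDigits b (d :: l) = (d : ℤ) + b * Nat.ofDigits b l := rfl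

lemma ofDigits_replicate_aux (p : ℕ) (hp : 1 ≤ p) (k : ℕ) :
    Nat.ofDigits (p : ℤ) (List.replicate k (p - 1)) = (p : ℤ) ^ k - 1 := by
  induction k with
  | zero => simp [ofDigits_int_nil]
  | succ n ih =>
    rw [List.replicate_succ, ofDigits_int_cons, ih]
    have h1 : ((p - 1 : ℕ) : ℤ) = (p : ℤ) - 1 := by omega
    rw [h1, pow_succ]; ring

lemma ofDigits_compl_aux (p : ℕ) (l : List ℕ) (h : ∀ d ∈ l, d < p) :
    Nat.ofDigits (p : ℤ) (l.map (fun d => p - d - 1)) =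
      (p : ℤ) ^ l.length - 1 - Nat.ofDigits (p : ℤ) l := by
  induction l with
  | nil => simp [ofDigits_int_nil]
  | cons d t ih =>
    simp only [List.map_cons, ofDigits_int_cons, List.length_cons]
    rw [ih (fun x hx => h x (List.mem_cons_of_mem _ hx))]
    have hd : d < p := h d (List.mem_cons_self)
    have h1 : ((p - d - 1 : ℕ) : ℤ) = (p : ℤ) - d - 1 := by omega
    rw [h1, pow_succ]; ring

/-- Let `p` be prime, `1 ≤ m ≤ p^j − 1`, and write `m = p^ν·M` with `p ∤ M`, where `M` has
base-`p` digits `[m_θ,…,m_1,m_0]` (so `Nat.digits p M = [m_0, m_1, …, m_θ]`) with `m_θ ≥ 1`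
and `θ < j`.  Then the base-`p` expansion of `M(p^j − 1)` is (big-endian)
`[m_θ,…,m_1,(m_0−1),(p−1),…,(p−1),(p−m_θ−1),…,(p−m_1−1),(p−m_0)]`, where `(p−1)` is
repeated `j−θ−1` times.  Here the expansion is expressed little-endian via `Nat.ofDigits`. -/
theorem stmt3 (p j m ν M : ℕ) (hp : p.Prime) (hj : 1 ≤ j) (hm1 : 1 ≤ m)
    (hm2 : m ≤ p ^ j - 1) (hfac : m = p ^ ν * M) (hM : ¬ p ∣ M) :
    (Nat.digits p M).length ≤ j ∧
    Nat.ofDigits p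
      ((p - (Nat.digits p M).headI) ::
        ((Nat.digits p M).tail.map (fun d => p - d - 1) ++
          List.replicate (j - (Nat.digits p M).length) (p - 1) ++
            ((Nat.digits p M).headI - 1) :: (Nat.digits p M).tail))
      = (M : ℤ) * (p ^ j - 1) := by
  have hp1 : 1 < p := hp.one_lt
  have hM0 : M ≠ 0 := by rintro rfl; exact hM (dvd_zero p)
  have hMle : M ≤ m := by
    rw [hfac]; exact Nat.le_mul_of_pos_left M (Nat.pow_pos (n := ν) hp.pos)
  have hMlt : M < p ^ j :=
    lt_of_le_of_lt (hMle.trans hm2) (Nat.sub_lt (Nat.pow_pos (n := j) hp.pos) one_pos)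
  have hL : (Nat.digits p M).length ≤ j := by
    rw [Nat.digits_len p M hp1 hM0]
    exact Nat.log_lt_of_lt_pow hM0 hMlt
  refine ⟨hL, ?_⟩
  have hdig : Nat.digits p M = M % p :: Nat.digits p (M / p) :=
    Nat.digits_def' hp1 (Nat.pos_of_ne_zero hM0)
  set t := Nat.digits p (M / p) with ht
  have hd0pos : 1 ≤ M % p := by
    rcases Nat.eq_zero_or_pos (M % p) with h | h
    · exact absurd (Nat.dvd_of_mod_eq_zero h) hM
    · exact h
  have hd0lt : M % p < p := Nat.mod_lt _ hp.pos
  have hMeq : (M : ℤ) = (M % p : ℕ) + (p : ℤ) * Nat.ofDigits (p : ℤ) t := by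
    conv_lhs => rw [← Nat.ofDigits_digits p M]
    rw [Nat.coe_ofDigits ℤ, hdig, ofDigits_int_cons]
  have hLlen : (Nat.digits p M).length = t.length + 1 := by rw [hdig]; simp
  obtain ⟨k, hk⟩ : ∃ k, j = (t.length + 1) + k := ⟨j - (t.length + 1), by omega⟩
  have hjL : j - (t.length + 1) = k := by omega
  rw [hdig]
  simp only [List.headI, List.tail, List.length_cons]
  rw [hjL]
  rw [Nat.ofDigits_cons, Nat.ofDigits_append, Nat.ofDigits_append, Nat.ofDigits_cons]
  push_cast [Nat.coe_ofDigits]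
  rw [ofDigits_compl_aux p t (fun d hd => Nat.digits_lt_base hp1 (ht ▸ hd)),
    ofDigits_replicate_aux p hp.pos k]
  have h1 : ((p - M % p : ℕ) : ℤ) = (p : ℤ) - (M % p : ℕ) := by omega
  have h2 : ((M % p - 1 : ℕ) : ℤ) = ((M % p : ℕ) : ℤ) - 1 := by omega
  rw [h1, h2]
  simp only [List.length_map, List.length_append, List.length_replicate, hk]
  rw [hMeq]
  ring
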